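/- Let w : (0,∞) → (0,∞) be increasing, locally absolutely continuous on (c,∞) for some c > 0, with w(y)/log y → ∞, and suppose for every ε ∈ (0,1) there is y_ε > c such that w′(y) ≤ e^{ε w(y)} a.e. on (y_ε,∞). Then for every ε ∈ (0,1) there is x_ε > 0 such that ∫₀^x e^{w(u)} du ≥ e^{(1-ε)w(x)} for all x > x_ε. -/

import Mathlib

open Filter MeasureTheory

theorem integral_exp_w_lower_bound_of_deriv_bound (w w' : ℝ → ℝ) (c : ℝ) (hc : 0 < c)
    (hwpos : ∀ y > 0, 0 < w y) (hwmono : StrictMonoOn w (Set.Ioi 0))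
    (hac : ∀ a b : ℝ, c < a → a ≤ b →
      IntegrableOn w' (Set.Ioc a b) ∧ w b - w a = ∫ y in Set.Ioc a b, w' y)
    (hwlog : Tendsto (fun y => w y / Real.log y) atTop atTop)
    (hderiv : ∀ ε ∈ Set.Ioo (0 : ℝ) 1, ∃ yε > c,
      ∀ᵐ y : ℝ, y > yε → w' y ≤ Real.exp (ε * w y)) :
    ∀ ε ∈ Set.Ioo (0 : ℝ) 1, ∃ xε > 0, ∀ x > xε,
      Real.exp ((1 - ε) * w x) ≤ ∫ u in Set.Ioc 0 x, Real.exp (w u) := by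
  intro ε hε
  obtain ⟨hε0, hε1⟩ := hε
  have hε'0 : (0:ℝ) < ε / 2 := by linarith
  have hε'1 : ε / 2 < 1 := by linarith
  obtain ⟨yε, hyc, hbound⟩ := hderiv (ε / 2) ⟨hε'0, hε'1⟩
  -- w tends to infinity
  have hwtop : Tendsto w atTop atTop := by
    apply tendsto_atTop_mono' atTop ?_ Real.tendsto_log_atTop
    filter_upwards [hwlog.eventually_ge_atTop 1, eventually_gt_atTop (1:ℝ)] with y h1 h2
    have hlog : 0 < Real.log y := Real.log_pos h2
    have : 1 * Real.log y ≤ (w y / Real.log y) * Real.log y :=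
      mul_le_mul_of_nonneg_right h1 hlog.le
    rwa [one_mul, div_mul_cancel₀ _ hlog.ne'] at this
  obtain ⟨M, hM⟩ := (hwtop.eventually_ge_atTop (2 / ε)).exists_forall_of_atTop
  refine ⟨max M (yε + 1), lt_of_lt_of_le (by linarith) (le_max_right _ _), ?_⟩
  intro x hx
  have hxM : M ≤ x := le_of_lt (lt_of_le_of_lt (le_max_left _ _) hx)
  have hxy : yε + 1 < x := lt_of_le_of_lt (le_max_right _ _) hx
  have hwx : 2 / ε ≤ w x := hM x hxM
  have hεw : 1 ≤ (ε / 2) * w x := by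
    have h1 : (ε / 2) * (2 / ε) ≤ (ε / 2) * w x :=
      mul_le_mul_of_nonneg_left hwx hε'0.le
    have h2 : (ε / 2) * (2 / ε) = 1 := by field_simp
    linarith
  set L : ℝ := Real.exp (-((ε / 2) * w x)) with hLdef
  have hL0 : 0 < L := Real.exp_pos _
  have hL1 : L ≤ 1 := Real.exp_le_one_iff.mpr (by linarith)
  have hxL : yε < x - L := by linarith
  have hcL : c < x - L := lt_trans hyc hxL
  have h0L : 0 < x - L := lt_trans hc hcL
  have hx0 : (0:ℝ) < x := by linarith
  -- key estimate on w on the interval (x - L, x]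
  have key : ∀ u ∈ Set.Ioc (x - L) x, w x - 1 ≤ w u := by
    intro u hu
    have hu1 : x - L < u := hu.1
    have hu2 : u ≤ x := hu.2
    have huy : yε < u := lt_trans hxL hu1
    have huc : c < u := lt_trans hyc huy
    have hu0 : (0:ℝ) < u := lt_trans hc huc
    obtain ⟨hint, heq⟩ := hac u x huc hu2
    have hae : ∀ᵐ y ∂(volume.restrict (Set.Ioc u x)),
        w' y ≤ Real.exp ((ε / 2) * w x) := by
      rw [ae_restrict_iff' measurableSet_Ioc]
      filter_upwards [hbound] with y hy hymem
      have hy0 : (0:ℝ) < y := lt_trans hu0 hymem.1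
      have h1 : w' y ≤ Real.exp ((ε / 2) * w y) := hy (lt_trans huy hymem.1)
      refine h1.trans (Real.exp_le_exp.mpr ?_)
      exact mul_le_mul_of_nonneg_left
        (hwmono.monotoneOn hy0 hx0 hymem.2) hε'0.le
    have hconst_int : IntegrableOn (fun _ : ℝ => Real.exp ((ε / 2) * w x))
        (Set.Ioc u x) volume := integrableOn_const measure_Ioc_lt_top.ne
    have hle : ∫ y in Set.Ioc u x, w' y
        ≤ ∫ _y in Set.Ioc u x, Real.exp ((ε / 2) * w x) :=
      integral_mono_ae hint hconst_int hae
    have hcval : ∫ _y in Set.Ioc u x, Real.exp ((ε / 2) * w x)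
        = (x - u) * Real.exp ((ε / 2) * w x) := by
      rw [setIntegral_const, Real.volume_real_Ioc_of_le (by linarith),
        smul_eq_mul]
    have hxu : x - u < L := by linarith
    have hmul : (x - u) * Real.exp ((ε / 2) * w x)
        ≤ L * Real.exp ((ε / 2) * w x) :=
      mul_le_mul_of_nonneg_right hxu.le (Real.exp_pos _).le
    have hLE : L * Real.exp ((ε / 2) * w x) = 1 := by
      rw [hLdef, ← Real.exp_add, neg_add_cancel, Real.exp_zero]
    have : w x - w u ≤ 1 := by rw [heq]; linarith [hle, hcval ▸ hle]
    linarith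
  -- integrability of exp ∘ w on (0, x]
  have hmeas : AEMeasurable w (volume.restrict (Set.Ioc 0 x)) :=
    aemeasurable_restrict_of_monotoneOn measurableSet_Ioc
      (hwmono.monotoneOn.mono Set.Ioc_subset_Ioi_self)
  have hint_exp : IntegrableOn (fun u => Real.exp (w u)) (Set.Ioc 0 x) volume := by
    refine ⟨(Real.measurable_exp.comp_aemeasurable hmeas).aestronglyMeasurable, ?_⟩
    apply HasFiniteIntegral.of_bounded (C := Real.exp (w x))
    rw [ae_restrict_iff' measurableSet_Ioc]
    refine Eventually.of_forall fun u hu => ?_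
    rw [Real.norm_eq_abs, abs_of_pos (Real.exp_pos _)]
    rcases eq_or_lt_of_le hu.2 with h | h
    · rw [h]
    · exact (Real.exp_le_exp.mpr (hwmono hu.1 (Set.mem_Ioi.mpr hx0) h).le)
  have hsubset : Set.Ioc (x - L) x ⊆ Set.Ioc 0 x := Set.Ioc_subset_Ioc_left h0L.le
  have hsub : ∫ u in Set.Ioc (x - L) x, Real.exp (w u)
      ≤ ∫ u in Set.Ioc 0 x, Real.exp (w u) := by
    apply setIntegral_mono_set hint_exp
    · exact Eventually.of_forall fun u => (Real.exp_pos _).le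
    · exact hsubset.eventuallyLE
  have hconst : ∫ _u in Set.Ioc (x - L) x, Real.exp (w x - 1)
      ≤ ∫ u in Set.Ioc (x - L) x, Real.exp (w u) := by
    apply setIntegral_mono_on (integrableOn_const measure_Ioc_lt_top.ne)
      (hint_exp.mono_set hsubset) measurableSet_Ioc
    intro u hu
    exact Real.exp_le_exp.mpr (key u hu)
  have hcval : ∫ _u in Set.Ioc (x - L) x, Real.exp (w x - 1)
      = L * Real.exp (w x - 1) := by
    rw [setIntegral_const, Real.volume_real_Ioc_of_le (by linarith),
      smul_eq_mul]
    ring_nf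
  have hfinal : Real.exp ((1 - ε) * w x) ≤ L * Real.exp (w x - 1) := by
    rw [hLdef, ← Real.exp_add]
    exact Real.exp_le_exp.mpr (by linarith)
  calc Real.exp ((1 - ε) * w x) ≤ L * Real.exp (w x - 1) := hfinal
    _ = ∫ _u in Set.Ioc (x - L) x, Real.exp (w x - 1) := hcval.symm
    _ ≤ ∫ u in Set.Ioc (x - L) x, Real.exp (w u) := hconst
    _ ≤ ∫ u in Set.Ioc 0 x, Real.exp (w u) := hsub
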